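/- Let E be a nonempty set and ℰ a nonempty collection of subsets of E. The Souslin class S(ℰ) is closed under countable unions: if Aᵐ ∈ S(ℰ) for every m ∈ ℕ, then ⋃_{m∈ℕ} Aᵐ ∈ S(ℰ). -/

import Mathlib

open Set


/-- A Souslin scheme with values in `ℰ ∪ {E}`: `A k s` is the set indexed by the
finite sequence `(s 0, …, s k)` of length `k+1`. -/
def IsSouslinScheme {E : Type*} (ℰ : Set (Set E)) (A : (k : ℕ) → (Fin (k + 1) → ℕ) → Set E) :
    Prop :=
  ∀ k s, A k s ∈ ℰ ∨ A k s = Set.univ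

/-- The set produced by the Souslin operation: `⋃_{n ∈ ℕ^ℕ} ⋂_k A_{n₁,…,n_k}`. -/
def souslinSet {E : Type*} (A : (k : ℕ) → (Fin (k + 1) → ℕ) → Set E) : Set E :=
  ⋃ f : ℕ → ℕ, ⋂ k : ℕ, A k fun i => f i

/-- The Souslin class `S(ℰ)`. -/
def SouslinClass {E : Type*} (ℰ : Set (Set E)) : Set (Set E) :=
  {S | ∃ A, IsSouslinScheme ℰ A ∧ S = souslinSet A}

/-- A Souslin scheme is monotone if it is vertically and horizontally monotone. -/
def IsMonotoneScheme {E : Type*} (A : (k : ℕ) → (Fin (k + 1) → ℕ) → Set E) : Prop :=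
  (∀ (k : ℕ) (s : Fin (k + 2) → ℕ), A (k + 1) s ⊆ A k fun i => s i.castSucc) ∧
  (∀ (k : ℕ) (s t : Fin (k + 1) → ℕ), (∀ i, s i ≤ t i) → A k s ⊆ A k t)

/-- The Souslin class `S(ℰ)` is closed under countable unions. -/
theorem souslinClass_iUnion {E : Type*} (ℰ : Set (Set E)) (hE : Nonempty E)
    (hℰ : ℰ.Nonempty) (A : ℕ → Set E) (hA : ∀ m, A m ∈ SouslinClass ℰ) :
    (⋃ m, A m) ∈ SouslinClass ℰ := by
  choose B hB hBs using hA
  refine ⟨fun k => match k with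
    | 0 => fun _ => Set.univ
    | k + 1 => fun s => B (s 0) k fun i => s i.succ, ?_, ?_⟩
  · intro k s
    match k with
    | 0 => exact Or.inr rfl
    | k + 1 => exact hB (s 0) k _
  · ext x
    simp only [mem_iUnion, souslinSet, mem_iInter, hBs]
    constructor
    · rintro ⟨m, g, hg⟩
      refine ⟨fun n => Nat.casesOn n m g, fun k => ?_⟩
      match k with
      | 0 => exact mem_univ x
      | k + 1 =>
        have := hg k
        convert this using 2
        all_goals simp [Fin.val_succ]
    · rintro ⟨f, hf⟩
      refine ⟨f 0, fun n => f (n + 1), fun k => ?_⟩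
      have := hf (k + 1)
      simp only [mem_iInter]
      convert this using 2
      all_goals simp [Fin.val_succ]
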